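/- Let μ < 1/4 and ε ∈ (0, min{1, √(1 − 4μ)}). Then there exists ρ ∈ (0, min{1, ρ₀}) such that on Ω_ρ the functions x ↦ δ(x)^{β₊}(1 − δ(x)^ε) and x ↦ δ(x)^{β₋}(1 + δ(x)^ε) are positive super-harmonics of L_μ, while x ↦ δ(x)^{β₊}(1 + δ(x)^ε) and x ↦ δ(x)^{β₋}(1 − δ(x)^ε) are positive sub-harmonics of L_μ. -/

import Mathlib

open Set Metric MeasureTheory Real

noncomputable section

/-- Distance to the boundary of `Ω`. -/
def bdist {N : ℕ} (Ω : Set (EuclideanSpace ℝ (Fin N))) (x : EuclideanSpace ℝ (Fin N)) : ℝ :=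
  Metric.infDist x Ωᶜ

/-- The collar `Ω_ρ = {x ∈ Ω : δ(x) < ρ}`. -/
def collar {N : ℕ} (Ω : Set (EuclideanSpace ℝ (Fin N))) (ρ : ℝ) :
    Set (EuclideanSpace ℝ (Fin N)) :=
  {x ∈ Ω | bdist Ω x < ρ}

/-- The ring `Ω_{ε,ρ} = {x ∈ Ω : ε < δ(x) < ρ}`. -/
def ring' {N : ℕ} (Ω : Set (EuclideanSpace ℝ (Fin N))) (ε ρ : ℝ) :
    Set (EuclideanSpace ℝ (Fin N)) :=
  {x ∈ Ω | ε < bdist Ω x ∧ bdist Ω x < ρ}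

/-- The Laplacian. -/
def lap {N : ℕ} (f : EuclideanSpace ℝ (Fin N) → ℝ) (x : EuclideanSpace ℝ (Fin N)) : ℝ :=
  ∑ i : Fin N, fderiv ℝ (fun y => fderiv ℝ f y (EuclideanSpace.single i 1)) x
    (EuclideanSpace.single i 1)

/-- `ρ₀` is a good collar width: `δ` is `C²` on `Ω_{ρ₀}`, `|∇δ| = 1` there, `Δδ` bounded. -/
def GoodCollar {N : ℕ} (Ω : Set (EuclideanSpace ℝ (Fin N))) (ρ₀ : ℝ) : Prop :=
  0 < ρ₀ ∧ ContDiffOn ℝ 2 (bdist Ω) (collar Ω ρ₀) ∧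
    (∀ x ∈ collar Ω ρ₀, ‖gradient (bdist Ω) x‖ = 1) ∧
    ∃ M, ∀ x ∈ collar Ω ρ₀, |lap (bdist Ω) x| ≤ M

/-- A super-harmonic of `L_μ = -Δ - μ/δ²` on `G`. -/
def SuperHarm {N : ℕ} (Ω : Set (EuclideanSpace ℝ (Fin N))) (μ : ℝ)
    (G : Set (EuclideanSpace ℝ (Fin N))) (h : EuclideanSpace ℝ (Fin N) → ℝ) : Prop :=
  ContDiffOn ℝ 2 h G ∧ ∀ x ∈ G, 0 ≤ -(lap h x) - μ / (bdist Ω x) ^ 2 * h x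

/-- A sub-harmonic of `L_μ = -Δ - μ/δ²` on `G`. -/
def SubHarm {N : ℕ} (Ω : Set (EuclideanSpace ℝ (Fin N))) (μ : ℝ)
    (G : Set (EuclideanSpace ℝ (Fin N))) (h : EuclideanSpace ℝ (Fin N) → ℝ) : Prop :=
  ContDiffOn ℝ 2 h G ∧ ∀ x ∈ G, -(lap h x) - μ / (bdist Ω x) ^ 2 * h x ≤ 0

/-- A positive local super-harmonic of `L_μ`, defined on the collar `Ω_σ`. -/
def PosSuperHarmOn {N : ℕ} (Ω : Set (EuclideanSpace ℝ (Fin N))) (μ σ : ℝ)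
    (h : EuclideanSpace ℝ (Fin N) → ℝ) : Prop :=
  SuperHarm Ω μ (collar Ω σ) h ∧ ∀ x ∈ collar Ω σ, 0 < h x

/-- A sub-solution of `(*)`: `-Δu - (μ/δ²)u + u^p/δ^s = 0` on `G`. -/
def SubSol {N : ℕ} (Ω : Set (EuclideanSpace ℝ (Fin N))) (μ s p : ℝ)
    (G : Set (EuclideanSpace ℝ (Fin N))) (u : EuclideanSpace ℝ (Fin N) → ℝ) : Prop :=
  ContDiffOn ℝ 2 u G ∧ (∀ x ∈ G, 0 ≤ u x) ∧
    ∀ x ∈ G, -(lap u x) - μ / (bdist Ω x) ^ 2 * u x + (u x) ^ p / (bdist Ω x) ^ s ≤ 0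

/-- A super-solution of `(*)` on `G`. -/
def SuperSol {N : ℕ} (Ω : Set (EuclideanSpace ℝ (Fin N))) (μ s p : ℝ)
    (G : Set (EuclideanSpace ℝ (Fin N))) (u : EuclideanSpace ℝ (Fin N) → ℝ) : Prop :=
  ContDiffOn ℝ 2 u G ∧ (∀ x ∈ G, 0 < u x) ∧
    ∀ x ∈ G, 0 ≤ -(lap u x) - μ / (bdist Ω x) ^ 2 * u x + (u x) ^ p / (bdist Ω x) ^ s

/-- A regularized distance `(d, c)` on `Ω`. -/
def RegDist {N : ℕ} (Ω : Set (EuclideanSpace ℝ (Fin N))) (d : EuclideanSpace ℝ (Fin N) → ℝ)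
    (c : ℝ) : Prop :=
  1 ≤ c ∧ ContDiffOn ℝ 2 d Ω ∧ (∀ x ∈ Ω, 0 < d x) ∧
    (∀ x ∈ Ω, c⁻¹ * bdist Ω x ≤ d x ∧ d x ≤ c * bdist Ω x) ∧
    (∀ x ∈ Ω, ‖gradient d x‖ ≤ c) ∧ (∀ x ∈ Ω, |lap d x| ≤ c / d x)


open Filter Topology in
private lemma lap_congr' {N : ℕ} {h k : EuclideanSpace ℝ (Fin N) → ℝ} {x}
    (H : h =ᶠ[𝓝 x] k) : lap h x = lap k x := by
  unfold lap
  refine Finset.sum_congr rfl fun i _ => ?_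
  have H2 : (fun y => fderiv ℝ h y (EuclideanSpace.single i 1)) =ᶠ[𝓝 x]
      (fun y => fderiv ℝ k y (EuclideanSpace.single i 1)) := by
    filter_upwards [H.eventuallyEq_nhds] with y hy
    rw [hy.fderiv_eq]
  rw [H2.fderiv_eq]

private lemma sum_sq_fderiv' {N : ℕ} (g : EuclideanSpace ℝ (Fin N) → ℝ) (x) :
    ∑ i : Fin N, (fderiv ℝ g x (EuclideanSpace.single i 1))^2 = ‖gradient g x‖^2 := by
  have key : ∀ i : Fin N, fderiv ℝ g x (EuclideanSpace.single i 1) = gradient g x i := by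
    intro i
    have : (fderiv ℝ g x) (EuclideanSpace.single i 1)
        = inner ℝ (gradient g x) (EuclideanSpace.single i (1:ℝ)) := by
      rw [gradient, InnerProductSpace.toDual_symm_apply]
    rw [this, PiLp.inner_apply]
    simp [EuclideanSpace.single_apply, RCLike.inner_apply]
  rw [← real_inner_self_eq_norm_sq, PiLp.inner_apply]
  refine Finset.sum_congr rfl fun i _ => ?_
  rw [key]
  simp [RCLike.inner_apply, pow_two]

open Filter Topology in
private lemma lap_comp' {N : ℕ} (U : Set (EuclideanSpace ℝ (Fin N))) (hU : IsOpen U)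
    (g : EuclideanSpace ℝ (Fin N) → ℝ) (hg : ContDiffOn ℝ 2 g U)
    (f f' f'' : ℝ → ℝ)
    (hf : ∀ y ∈ U, HasDerivAt f (f' (g y)) (g y))
    (hf' : ∀ y ∈ U, HasDerivAt f' (f'' (g y)) (g y))
    (x) (hx : x ∈ U) :
    lap (f ∘ g) x = f'' (g x) * ∑ i : Fin N, (fderiv ℝ g x (EuclideanSpace.single i 1))^2
      + f' (g x) * lap g x := by
  have hgd : ∀ y ∈ U, DifferentiableAt ℝ g y := fun y hy =>
    (hg.contDiffAt (hU.mem_nhds hy)).differentiableAt (by norm_num)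
  have hgd1 : ContDiffOn ℝ 1 (fderiv ℝ g) U := hg.fderiv_of_isOpen hU (by norm_num)
  have hcomp : ∀ y ∈ U, HasFDerivAt (f ∘ g) (f' (g y) • fderiv ℝ g y) y := fun y hy =>
    (hf y hy).comp_hasFDerivAt y (hgd y hy).hasFDerivAt
  unfold lap
  rw [Finset.mul_sum, Finset.mul_sum, ← Finset.sum_add_distrib]
  refine Finset.sum_congr rfl fun i _ => ?_
  set e := EuclideanSpace.single (𝕜 := ℝ) i (1:ℝ) with he
  have hEv : (fun y => fderiv ℝ (f ∘ g) y e) =ᶠ[𝓝 x]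
      (fun y => f' (g y) * fderiv ℝ g y e) := by
    filter_upwards [hU.mem_nhds hx] with y hy
    rw [(hcomp y hy).fderiv]
    simp
  rw [hEv.fderiv_eq]
  have hA : HasFDerivAt (fun y => f' (g y)) (f'' (g x) • fderiv ℝ g x) x :=
    (hf' x hx).comp_hasFDerivAt x (hgd x hx).hasFDerivAt
  have hBdiff : DifferentiableAt ℝ (fun y => fderiv ℝ g y e) x := by
    have h1 : DifferentiableAt ℝ (fderiv ℝ g) x :=
      ((hgd1.contDiffAt (hU.mem_nhds hx)).differentiableAt (by norm_num))
    exact h1.clm_apply (differentiableAt_const e)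
  have hB : HasFDerivAt (fun y => fderiv ℝ g y e)
      (fderiv ℝ (fun y => fderiv ℝ g y e) x) x := hBdiff.hasFDerivAt
  have hprod : HasFDerivAt (fun y => f' (g y) * fderiv ℝ g y e)
      ((f' (g x)) • (fderiv ℝ (fun y => fderiv ℝ g y e) x)
        + (fderiv ℝ g x e) • (f'' (g x) • fderiv ℝ g x)) x := hA.mul hB
  rw [hprod.fderiv]
  simp only [ContinuousLinearMap.add_apply, ContinuousLinearMap.smul_apply, smul_eq_mul]
  ring

private lemma bdist_pos' {N : ℕ} (hN : 2 ≤ N) {Ω : Set (EuclideanSpace ℝ (Fin N))}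
    (hΩo : IsOpen Ω) (hΩb : Bornology.IsBounded Ω) {y} (hy : y ∈ Ω) : 0 < bdist Ω y := by
  haveI : Nonempty (Fin N) := ⟨⟨0, by omega⟩⟩
  have hcne : Ωᶜ.Nonempty := by
    by_contra hc
    rw [Set.not_nonempty_iff_eq_empty, Set.compl_empty_iff] at hc
    subst hc
    haveI : Nontrivial (EuclideanSpace ℝ (Fin N)) := by
      refine ⟨⟨EuclideanSpace.single (⟨0, by omega⟩ : Fin N) (1:ℝ), 0, ?_⟩⟩
      intro h
      have := congrArg norm h
      simp [EuclideanSpace.norm_single] at this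
    obtain ⟨R, hR⟩ := hΩb.subset_closedBall 0
    obtain ⟨z, hz⟩ := NormedSpace.exists_lt_norm ℝ (EuclideanSpace ℝ (Fin N)) R
    have := hR (Set.mem_univ z)
    rw [Metric.mem_closedBall, dist_zero_right] at this
    linarith
  exact (hΩo.isClosed_compl.notMem_iff_infDist_pos hcne).1 (Set.notMem_compl_iff.mpr hy)

private lemma collar_open' {N : ℕ} {Ω : Set (EuclideanSpace ℝ (Fin N))} (hΩo : IsOpen Ω) (ρ : ℝ) :
    IsOpen (collar Ω ρ) := by
  have : collar Ω ρ = Ω ∩ {x | bdist Ω x < ρ} := rfl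
  rw [this]
  exact hΩo.inter (isOpen_lt (continuous_infDist_pt _) continuous_const)

open Filter Topology in
private lemma master' {N : ℕ} {Ω : Set (EuclideanSpace ℝ (Fin N))} {ρ ρ₀ μ ε M Cm : ℝ}
    (hN : 2 ≤ N) (hΩo : IsOpen Ω) (hΩb : Bornology.IsBounded Ω)
    (hδC2 : ContDiffOn ℝ 2 (bdist Ω) (collar Ω ρ₀))
    (hgrad : ∀ x ∈ collar Ω ρ₀, ‖gradient (bdist Ω) x‖ = 1)
    (hM : ∀ x ∈ collar Ω ρ₀, |lap (bdist Ω) x| ≤ M) (hM0 : 0 ≤ M)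
    (hρ0 : 0 < ρ) (hρρ₀ : ρ ≤ ρ₀) (hρ1 : ρ < 1)
    (hε0 : 0 < ε) (hε1 : ε < 1)
    (β s : ℝ) (hβ : β * (β - 1) + μ = 0) (hs : |s| = 1)
    (hKρ : M * (|β| + |β + ε|) * ρ ^ (1 - ε) ≤ Cm)
    (h : EuclideanSpace ℝ (Fin N) → ℝ)
    (hfun : ∀ y, h y = bdist Ω y ^ β * (1 + s * bdist Ω y ^ ε)) :
    ContDiffOn ℝ 2 h (collar Ω ρ) ∧
    ∀ x ∈ collar Ω ρ,
      |(-(lap h x) - μ / (bdist Ω x) ^ 2 * h x)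
        - (-s * (ε * (ε + 2 * β - 1)) * (bdist Ω x) ^ (β + ε - 2))|
      ≤ Cm * (bdist Ω x) ^ (β + ε - 2) := by
  set g := bdist Ω with hgdef
  set U := collar Ω ρ with hU
  have hUopen : IsOpen U := collar_open' hΩo ρ
  have hsub : U ⊆ collar Ω ρ₀ := fun x hx => ⟨hx.1, hx.2.trans_le hρρ₀⟩
  have hgC2 : ContDiffOn ℝ 2 g U := hδC2.mono hsub
  have hpos : ∀ y ∈ U, 0 < g y := fun y hy => bdist_pos' hN hΩo hΩb hy.1
  set F : ℝ → ℝ := fun t => t ^ β + s * t ^ (β + ε) with hF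
  set F1 : ℝ → ℝ := fun t => β * t ^ (β - 1) + s * ((β + ε) * t ^ (β + ε - 1)) with hF1
  set F2 : ℝ → ℝ := fun t => β * ((β - 1) * t ^ (β - 1 - 1))
      + s * ((β + ε) * ((β + ε - 1) * t ^ (β + ε - 1 - 1))) with hF2
  have hFd : ∀ u : ℝ, u ≠ 0 → HasDerivAt F (F1 u) u := fun u hu =>
    (Real.hasDerivAt_rpow_const (Or.inl hu)).add
      ((Real.hasDerivAt_rpow_const (Or.inl hu)).const_mul s)
  have hF1d : ∀ u : ℝ, u ≠ 0 → HasDerivAt F1 (F2 u) u := fun u hu =>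
    ((Real.hasDerivAt_rpow_const (Or.inl hu)).const_mul β).add
      (((Real.hasDerivAt_rpow_const (Or.inl hu)).const_mul (β + ε)).const_mul s)
  have hEq : ∀ y ∈ U, h y = F (g y) := by
    intro y hy
    rw [hfun y, hF]
    simp only
    rw [Real.rpow_add (hpos y hy)]
    ring
  constructor
  · refine ContDiffOn.congr ?_ hEq
    have hFC : ContDiffOn ℝ 2 F {u : ℝ | u ≠ 0} := by
      intro u hu
      exact (((Real.contDiffAt_rpow_const_of_ne hu).add
        (contDiffAt_const.mul (Real.contDiffAt_rpow_const_of_ne hu))).contDiffWithinAt)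
    exact hFC.comp hgC2 fun y hy => (hpos y hy).ne'
  · intro x hx
    set t := g x with ht
    have ht0 : 0 < t := hpos x hx
    have htρ : t < ρ := hx.2
    have ht1 : t < 1 := htρ.trans hρ1
    set L := lap g x with hL
    have hLM : |L| ≤ M := hM x (hsub hx)
    have hlap : lap h x = F2 t + F1 t * L := by
      have hev : h =ᶠ[𝓝 x] (F ∘ g) :=
        eventually_of_mem (hUopen.mem_nhds hx) fun y hy => hEq y hy
      rw [lap_congr' hev,
        lap_comp' U hUopen g hgC2 F F1 F2 (fun y hy => hFd _ (hpos y hy).ne')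
          (fun y hy => hF1d _ (hpos y hy).ne') x hx,
        sum_sq_fderiv', hgrad x (hsub hx)]
      ring
    set p1 := t ^ (β - 2) with hp1
    set p2 := t ^ (β + ε - 2) with hp2
    have ep1 : t ^ (β - 1 - 1) = p1 := by rw [hp1]; ring_nf
    have ep2 : t ^ (β + ε - 1 - 1) = p2 := by rw [hp2]; ring_nf
    have hb : t ^ β = p1 * t ^ 2 := by
      rw [hp1, ← Real.rpow_natCast t 2, ← Real.rpow_add ht0]; norm_num
    have hbe : t ^ (β + ε) = p2 * t ^ 2 := by
      rw [hp2, ← Real.rpow_natCast t 2, ← Real.rpow_add ht0]; ring_nf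
    have hb1 : t ^ (β - 1) = p2 * t ^ (1 - ε) := by
      rw [hp2, ← Real.rpow_add ht0]; ring_nf
    have hb1e : t ^ (β + ε - 1) = p2 * t := by
      nth_rewrite 2 [← Real.rpow_one t]
      rw [hp2, ← Real.rpow_add ht0]; ring_nf
    have ht2 : (0:ℝ) < t ^ 2 := by positivity
    have heq : -(lap h x) - μ / t ^ 2 * h x
        = -s * (ε * (ε + 2 * β - 1)) * p2 - F1 t * L := by
      rw [hlap, hEq x hx, hF, hF1, hF2]
      simp only
      rw [ep1, ep2, hb, hbe]
      field_simp
      linear_combination (-(p1) - s * p2) * hβ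
    rw [heq]
    have habs : |(-s * (ε * (ε + 2 * β - 1)) * p2 - F1 t * L)
        - (-s * (ε * (ε + 2 * β - 1)) * p2)| = |F1 t| * |L| := by
      rw [show (-s * (ε * (ε + 2 * β - 1)) * p2 - F1 t * L)
        - (-s * (ε * (ε + 2 * β - 1)) * p2) = -(F1 t * L) by ring, abs_neg, abs_mul]
    rw [habs]
    have hp2pos : 0 < p2 := Real.rpow_pos_of_pos ht0 _
    have htle : t ≤ t ^ (1 - ε) := by
      nth_rewrite 1 [← Real.rpow_one t]
      exact Real.rpow_le_rpow_of_exponent_ge ht0 ht1.le (by linarith)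
    have htρ' : t ^ (1 - ε) ≤ ρ ^ (1 - ε) :=
      Real.rpow_le_rpow ht0.le htρ.le (by linarith)
    have hF1bound : |F1 t| ≤ (|β| + |β + ε|) * (t ^ (1 - ε)) * p2 := by
      rw [hF1]
      simp only
      calc |β * t ^ (β - 1) + s * ((β + ε) * t ^ (β + ε - 1))|
          ≤ |β * t ^ (β - 1)| + |s * ((β + ε) * t ^ (β + ε - 1))| := abs_add_le _ _
        _ = |β| * t ^ (β - 1) + |β + ε| * t ^ (β + ε - 1) := by
            rw [abs_mul, abs_mul, abs_mul, hs, abs_of_pos (Real.rpow_pos_of_pos ht0 _),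
              abs_of_pos (Real.rpow_pos_of_pos ht0 _), one_mul]
        _ ≤ |β| * (p2 * t ^ (1 - ε)) + |β + ε| * (p2 * t ^ (1 - ε)) := by
            rw [hb1, hb1e]
            have h1 : |β + ε| * (p2 * t) ≤ |β + ε| * (p2 * t ^ (1 - ε)) := by
              apply mul_le_mul_of_nonneg_left _ (abs_nonneg _)
              exact mul_le_mul_of_nonneg_left htle hp2pos.le
            have h2 : |β| * (p2 * t ^ (1 - ε)) ≤ |β| * (p2 * t ^ (1 - ε)) := le_refl _
            linarith
        _ = (|β| + |β + ε|) * (t ^ (1 - ε)) * p2 := by ring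
    calc |F1 t| * |L| ≤ ((|β| + |β + ε|) * (t ^ (1 - ε)) * p2) * M := by
          apply mul_le_mul hF1bound hLM (abs_nonneg _)
          positivity
      _ = (M * (|β| + |β + ε|) * t ^ (1 - ε)) * p2 := by ring
      _ ≤ Cm * p2 := by
          apply mul_le_mul_of_nonneg_right _ hp2pos.le
          calc M * (|β| + |β + ε|) * t ^ (1 - ε)
              ≤ M * (|β| + |β + ε|) * ρ ^ (1 - ε) := by
                apply mul_le_mul_of_nonneg_left htρ' (by positivity)
            _ ≤ Cm := hKρ

set_option maxHeartbeats 2000000 in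
/-- Let `μ < 1/4` and `ε ∈ (0, min{1, √(1-4μ)})`. Then on some collar
`Ω_ρ` with `ρ ∈ (0, min{1, ρ₀})`, the functions `δ^{β₊}(1-δ^ε)` and `δ^{β₋}(1+δ^ε)` are
positive super-harmonics of `L_μ`, while `δ^{β₊}(1+δ^ε)` and `δ^{β₋}(1-δ^ε)` are positive
sub-harmonics of `L_μ`. -/
theorem stmt5 {N : ℕ} (hN : 2 ≤ N) (Ω : Set (EuclideanSpace ℝ (Fin N)))
    (hΩo : IsOpen Ω) (hΩne : Ω.Nonempty) (hΩb : Bornology.IsBounded Ω)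
    (ρ₀ : ℝ) (hρ₀ : GoodCollar Ω ρ₀) (μ : ℝ) (hμ : μ < 1 / 4)
    (ε : ℝ) (hε0 : 0 < ε) (hε1 : ε < min 1 (Real.sqrt (1 - 4 * μ))) :
    ∃ ρ, 0 < ρ ∧ ρ < min 1 ρ₀ ∧
      (SuperHarm Ω μ (collar Ω ρ)
          (fun x => bdist Ω x ^ (1 / 2 + Real.sqrt (1 / 4 - μ)) * (1 - bdist Ω x ^ ε)) ∧
        ∀ x ∈ collar Ω ρ,
          0 < bdist Ω x ^ (1 / 2 + Real.sqrt (1 / 4 - μ)) * (1 - bdist Ω x ^ ε)) ∧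
      (SuperHarm Ω μ (collar Ω ρ)
          (fun x => bdist Ω x ^ (1 / 2 - Real.sqrt (1 / 4 - μ)) * (1 + bdist Ω x ^ ε)) ∧
        ∀ x ∈ collar Ω ρ,
          0 < bdist Ω x ^ (1 / 2 - Real.sqrt (1 / 4 - μ)) * (1 + bdist Ω x ^ ε)) ∧
      (SubHarm Ω μ (collar Ω ρ)
          (fun x => bdist Ω x ^ (1 / 2 + Real.sqrt (1 / 4 - μ)) * (1 + bdist Ω x ^ ε)) ∧
        ∀ x ∈ collar Ω ρ,
          0 < bdist Ω x ^ (1 / 2 + Real.sqrt (1 / 4 - μ)) * (1 + bdist Ω x ^ ε)) ∧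
      (SubHarm Ω μ (collar Ω ρ)
          (fun x => bdist Ω x ^ (1 / 2 - Real.sqrt (1 / 4 - μ)) * (1 - bdist Ω x ^ ε)) ∧
        ∀ x ∈ collar Ω ρ,
          0 < bdist Ω x ^ (1 / 2 - Real.sqrt (1 / 4 - μ)) * (1 - bdist Ω x ^ ε)) := by
  obtain ⟨hρ₀pos, hδC2, hgrad, M0, hM0orig⟩ := hρ₀
  have hr0 : (0:ℝ) < 1 / 4 - μ := by linarith
  set r := Real.sqrt (1 / 4 - μ) with hrdef
  have hr : 0 < r := Real.sqrt_pos.mpr hr0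
  have hr2 : r ^ 2 = 1 / 4 - μ := Real.sq_sqrt hr0.le
  have hε1' : ε < 1 := lt_of_lt_of_le hε1 (min_le_left _ _)
  have hε2r : ε < 2 * r := by
    have h1 : ε < Real.sqrt (1 - 4 * μ) := lt_of_lt_of_le hε1 (min_le_right _ _)
    have h2 : Real.sqrt (1 - 4 * μ) = 2 * r := by
      rw [show (1:ℝ) - 4 * μ = (2 * r) ^ 2 by linear_combination (-4)*hr2, Real.sqrt_sq (by linarith)]
    linarith
  set βp := 1 / 2 + r with hβpdef
  set βm := 1 / 2 - r with hβmdef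
  have hβproot : βp * (βp - 1) + μ = 0 := by rw [hβpdef]; linear_combination hr2
  have hβmroot : βm * (βm - 1) + μ = 0 := by rw [hβmdef]; linear_combination hr2
  have hβpabs : |βp| ≤ 1 / 2 + r := by
    rw [hβpdef, abs_of_pos (by linarith : (0:ℝ) < 1 / 2 + r)]
  have hβmabs : |βm| ≤ 1 / 2 + r := abs_le.mpr ⟨by rw [hβmdef]; linarith, by rw [hβmdef]; linarith⟩
  set M := max M0 1 with hMdef
  have hM1 : (1:ℝ) ≤ M := le_max_right _ _
  have hMnn : (0:ℝ) ≤ M := by linarith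
  have hM : ∀ x ∈ collar Ω ρ₀, |lap (bdist Ω) x| ≤ M := fun x hx =>
    (hM0orig x hx).trans (le_max_left _ _)
  set K := M * (1 + 2 * r + ε) with hKdef
  have hK : 0 < K := by rw [hKdef]; nlinarith [hM1, hr, hε0]
  set Cm := ε * (2 * r - ε) with hCmdef
  have hCm : 0 < Cm := by rw [hCmdef]; exact mul_pos hε0 (by linarith)
  set B := min 1 ((Cm / K) ^ (1 - ε)⁻¹) with hBdef
  have hB : 0 < B := lt_min one_pos (Real.rpow_pos_of_pos (by positivity) _)
  set ρ := (1 / 2) * min B (min 1 ρ₀) with hρdef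
  clear_value r βp βm M K Cm B ρ
  have hmin : 0 < min B (min 1 ρ₀) := lt_min hB (lt_min one_pos hρ₀pos)
  have hρ0 : 0 < ρ := by rw [hρdef]; linarith
  have hρlt : ρ < min 1 ρ₀ := by
    have h1 : min B (min 1 ρ₀) ≤ min 1 ρ₀ := min_le_right _ _
    rw [hρdef]; linarith
  have hρ1 : ρ < 1 := lt_of_lt_of_le hρlt (min_le_left _ _)
  have hρρ₀ : ρ ≤ ρ₀ := (lt_of_lt_of_le hρlt (min_le_right _ _)).le
  have hρB : ρ ≤ B := by
    have h1 : min B (min 1 ρ₀) ≤ B := min_le_left _ _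
    rw [hρdef]; linarith
  have hbound : K * ρ ^ (1 - ε) ≤ Cm := by
    have h1 : ρ ^ (1 - ε) ≤ ((Cm / K) ^ (1 - ε)⁻¹) ^ (1 - ε) :=
      Real.rpow_le_rpow hρ0.le (hρB.trans (by rw [hBdef]; exact min_le_right _ _)) (by linarith)
    have h2 : ((Cm / K) ^ (1 - ε)⁻¹) ^ (1 - ε) = Cm / K := by
      rw [← Real.rpow_mul (by positivity : (0:ℝ) ≤ Cm / K),
        inv_mul_cancel₀ (by linarith : (1:ℝ) - ε ≠ 0), Real.rpow_one]
    rw [h2] at h1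
    calc K * ρ ^ (1 - ε) ≤ K * (Cm / K) := mul_le_mul_of_nonneg_left h1 hK.le
      _ = Cm := by field_simp
  have hKρ : ∀ β : ℝ, |β| ≤ 1 / 2 + r → M * (|β| + |β + ε|) * ρ ^ (1 - ε) ≤ Cm := by
    intro β hβ
    have h3 : |β + ε| ≤ |β| + ε := by
      calc |β + ε| ≤ |β| + |ε| := abs_add_le _ _
        _ = |β| + ε := by rw [abs_of_pos hε0]
    have h4 : M * (|β| + |β + ε|) ≤ K := by
      rw [hKdef]
      apply mul_le_mul_of_nonneg_left _ hMnn
      linarith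
    calc M * (|β| + |β + ε|) * ρ ^ (1 - ε) ≤ K * ρ ^ (1 - ε) := by
          apply mul_le_mul_of_nonneg_right h4 (Real.rpow_nonneg hρ0.le _)
      _ ≤ Cm := hbound
  -- common facts
  have hδpos : ∀ x ∈ collar Ω ρ, 0 < bdist Ω x := fun x hx => bdist_pos' hN hΩo hΩb hx.1
  have hδlt1 : ∀ x ∈ collar Ω ρ, bdist Ω x < 1 := fun x hx => hx.2.trans hρ1
  have hfactm : ∀ x ∈ collar Ω ρ, 0 < 1 - bdist Ω x ^ ε := by
    intro x hx
    have := Real.rpow_lt_one (hδpos x hx).le (hδlt1 x hx) hε0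
    linarith
  have hfactp : ∀ x ∈ collar Ω ρ, 0 < 1 + bdist Ω x ^ ε := by
    intro x hx
    have := Real.rpow_pos_of_pos (hδpos x hx) ε
    linarith
  have hsm : |(-1 : ℝ)| = 1 := by norm_num
  have hsp : |(1 : ℝ)| = 1 := abs_one
  -- four instantiations of the master lemma
  obtain ⟨hc1, hb1⟩ := master' hN hΩo hΩb hδC2 hgrad hM hMnn hρ0 hρρ₀ hρ1 hε0 hε1'
    βp (-1) hβproot hsm (hKρ βp hβpabs)
    (fun x => bdist Ω x ^ βp * (1 - bdist Ω x ^ ε)) (fun y => by ring)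
  obtain ⟨hc2, hb2⟩ := master' hN hΩo hΩb hδC2 hgrad hM hMnn hρ0 hρρ₀ hρ1 hε0 hε1'
    βm 1 hβmroot hsp (hKρ βm hβmabs)
    (fun x => bdist Ω x ^ βm * (1 + bdist Ω x ^ ε)) (fun y => by ring)
  obtain ⟨hc3, hb3⟩ := master' hN hΩo hΩb hδC2 hgrad hM hMnn hρ0 hρρ₀ hρ1 hε0 hε1'
    βp 1 hβproot hsp (hKρ βp hβpabs)
    (fun x => bdist Ω x ^ βp * (1 + bdist Ω x ^ ε)) (fun y => by ring)
  obtain ⟨hc4, hb4⟩ := master' hN hΩo hΩb hδC2 hgrad hM hMnn hρ0 hρρ₀ hρ1 hε0 hε1'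
    βm (-1) hβmroot hsm (hKρ βm hβmabs)
    (fun x => bdist Ω x ^ βm * (1 - bdist Ω x ^ ε)) (fun y => by ring)
  refine ⟨ρ, hρ0, hρlt, ⟨⟨hc1, ?_⟩, ?_⟩, ⟨⟨hc2, ?_⟩, ?_⟩, ⟨⟨hc3, ?_⟩, ?_⟩, ⟨⟨hc4, ?_⟩, ?_⟩⟩
  · -- δ^{β₊}(1-δ^ε) super
    intro x hx
    have h := abs_le.mp (hb1 x hx)
    have hp2 : (0:ℝ) < (bdist Ω x) ^ (βp + ε - 2) := Real.rpow_pos_of_pos (hδpos x hx) _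
    have hD : Cm ≤ -(-1 : ℝ) * (ε * (ε + 2 * βp - 1)) := by
      rw [hCmdef, hβpdef]; nlinarith [sq_nonneg ε, hε0]
    linarith [h.1, mul_le_mul_of_nonneg_right hD hp2.le]
  · intro x hx
    exact mul_pos (Real.rpow_pos_of_pos (hδpos x hx) _) (hfactm x hx)
  · -- δ^{β₋}(1+δ^ε) super
    intro x hx
    have h := abs_le.mp (hb2 x hx)
    have hp2 : (0:ℝ) < (bdist Ω x) ^ (βm + ε - 2) := Real.rpow_pos_of_pos (hδpos x hx) _
    have hD : Cm ≤ -(1 : ℝ) * (ε * (ε + 2 * βm - 1)) := by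
      rw [hCmdef, hβmdef]; nlinarith [sq_nonneg ε, hε0]
    linarith [h.1, mul_le_mul_of_nonneg_right hD hp2.le]
  · intro x hx
    exact mul_pos (Real.rpow_pos_of_pos (hδpos x hx) _) (hfactp x hx)
  · -- δ^{β₊}(1+δ^ε) sub
    intro x hx
    have h := abs_le.mp (hb3 x hx)
    have hp2 : (0:ℝ) < (bdist Ω x) ^ (βp + ε - 2) := Real.rpow_pos_of_pos (hδpos x hx) _
    have hD : -(1 : ℝ) * (ε * (ε + 2 * βp - 1)) ≤ -Cm := by
      rw [hCmdef, hβpdef]; nlinarith [sq_nonneg ε, hε0]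
    linarith [h.2, mul_le_mul_of_nonneg_right hD hp2.le]
  · intro x hx
    exact mul_pos (Real.rpow_pos_of_pos (hδpos x hx) _) (hfactp x hx)
  · -- δ^{β₋}(1-δ^ε) sub
    intro x hx
    have h := abs_le.mp (hb4 x hx)
    have hp2 : (0:ℝ) < (bdist Ω x) ^ (βm + ε - 2) := Real.rpow_pos_of_pos (hδpos x hx) _
    have hD : -(-1 : ℝ) * (ε * (ε + 2 * βm - 1)) ≤ -Cm := by
      rw [hCmdef, hβmdef]; nlinarith [sq_nonneg ε, hε0]
    linarith [h.2, mul_le_mul_of_nonneg_right hD hp2.le]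
  · intro x hx
    exact mul_pos (Real.rpow_pos_of_pos (hδpos x hx) _) (hfactm x hx)
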